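/- Let Γ = (V, E) be a finite set of species V and reactions E with stoichiometric matrix S ∈ ℝ^{V×E}. For a subnetwork γ = (V_γ, E_γ) with V_γ ⊆ V and E_γ ⊆ E, define the flux influence index λ_f(γ) = -|V_γ| + |E_γ| + dim(P⁰_γ(coker S)), where P⁰_γ is the coordinate projection onto V_γ. Then λ_f is submodular: λ_f(γ1) + λ_f(γ2) ≥ λ_f(γ1 ∩ γ2) + λ_f(γ1 ∪ γ2), where intersection and union of subnetworks are taken componentwise. -/
import Mathlib


open Matrix

/-- Coordinate projection onto the coordinates in `γ`. -/
noncomputable def coordProj (V : Type*) [Fintype V] [DecidableEq V]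
    (γ : Finset V) : (V → ℝ) →ₗ[ℝ] (V → ℝ) where
  toFun d := fun v => if v ∈ γ then d v else 0
  map_add' d₁ d₂ := by ext v; by_cases h : v ∈ γ <;> simp [h]
  map_smul' a d := by ext v; by_cases h : v ∈ γ <;> simp [h]

/-- The cokernel (left null space) of `S`: `{d : dᵀ S = 0}`. -/
noncomputable def cokerMat {V E : Type*} [Fintype V] [Fintype E]
    (S : Matrix V E ℝ) : Submodule ℝ (V → ℝ) :=
  LinearMap.ker (Sᵀ).mulVecLin

/-- The flux influence index `λ_f(γ) = -|V_γ| + |E_γ| + dim (P⁰_γ (coker S))`. -/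
noncomputable def fluxIndex {V E : Type*} [Fintype V] [Fintype E] [DecidableEq V]
    (S : Matrix V E ℝ) (γ : Finset V × Finset E) : ℤ :=
  -(γ.1.card : ℤ) + (γ.2.card : ℤ) +
    (Module.finrank ℝ ((cokerMat S).map (coordProj V γ.1)) : ℤ)

lemma coordProj_apply {V : Type*} [Fintype V] [DecidableEq V] (γ : Finset V)
    (d : V → ℝ) (v : V) : coordProj V γ d v = if v ∈ γ then d v else 0 := rfl

lemma coordProj_comp {V : Type*} [Fintype V] [DecidableEq V] (a b : Finset V) :
    (coordProj V a) ∘ₗ (coordProj V b) = coordProj V (a ∩ b) := by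
  apply LinearMap.ext; intro d; funext v
  by_cases ha : v ∈ a <;> by_cases hb : v ∈ b <;>
    simp [coordProj_apply, ha, hb, Finset.mem_inter]

lemma finrank_proj_submodular {V : Type*} [Fintype V] [DecidableEq V]
    (D : Submodule ℝ (V → ℝ)) (a b : Finset V) :
    Module.finrank ℝ (D.map (coordProj V (a ∩ b))) +
      Module.finrank ℝ (D.map (coordProj V (a ∪ b))) ≤
    Module.finrank ℝ (D.map (coordProj V a)) +
      Module.finrank ℝ (D.map (coordProj V b)) := by
  set Mu := D.map (coordProj V (a ∪ b)) with hMu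
  set Mb := D.map (coordProj V b) with hMb
  let f₁ : Mu →ₗ[ℝ] (V → ℝ) := (coordProj V a) ∘ₗ Mu.subtype
  let f₂ : Mb →ₗ[ℝ] (V → ℝ) := (coordProj V a) ∘ₗ Mb.subtype
  have hr₁ : LinearMap.range f₁ = D.map (coordProj V a) := by
    rw [LinearMap.range_comp, Submodule.range_subtype, hMu, ← Submodule.map_comp,
      coordProj_comp]
    congr 1
    congr 1
    ext v; simp [Finset.mem_inter, Finset.mem_union]; tauto
  have hr₂ : LinearMap.range f₂ = D.map (coordProj V (a ∩ b)) := by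
    rw [LinearMap.range_comp, Submodule.range_subtype, hMb, ← Submodule.map_comp,
      coordProj_comp]
  have h₁ := LinearMap.finrank_range_add_finrank_ker f₁
  have h₂ := LinearMap.finrank_range_add_finrank_ker f₂
  rw [hr₁] at h₁
  rw [hr₂] at h₂
  have hker : (LinearMap.ker f₁).map Mu.subtype ≤ (LinearMap.ker f₂).map Mb.subtype := by
    rintro x hx
    rcases hx with ⟨⟨x, hxMu⟩, hx0, rfl⟩
    have hx0' : coordProj V a x = 0 := hx0
    rcases hxMu with ⟨d, hd, rfl⟩
    have hxb : coordProj V b (coordProj V (a ∪ b) d) = coordProj V (a ∪ b) d := by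
      funext v
      by_cases hvb : v ∈ b
      · simp [coordProj_apply, hvb]
      · have hva : coordProj V a (coordProj V (a ∪ b) d) v = 0 := by
          rw [hx0']; rfl
        by_cases hva' : v ∈ a
        · have hvu : v ∈ a ∪ b := Finset.mem_union_left _ hva'
          simp only [coordProj_apply, hva', hvu, if_pos] at hva
          simp [coordProj_apply, hvb, hva]
        · simp [coordProj_apply, hvb, Finset.mem_union, hva']
    have hmem : coordProj V (a ∪ b) d ∈ Mb := by
      rw [← hxb]
      have : coordProj V b (coordProj V (a ∪ b) d)
          = coordProj V (b ∩ (a ∪ b)) d := by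
        rw [← coordProj_comp]; rfl
      rw [this]
      have hbeq : b ∩ (a ∪ b) = b := by
        ext v; simp [Finset.mem_inter, Finset.mem_union]
      rw [hbeq]
      exact Submodule.mem_map_of_mem hd
    exact ⟨⟨coordProj V (a ∪ b) d, hmem⟩, hx0', rfl⟩
  have hkf : Module.finrank ℝ (LinearMap.ker f₁) ≤ Module.finrank ℝ (LinearMap.ker f₂) := by
    have e₁ : Module.finrank ℝ ((LinearMap.ker f₁).map Mu.subtype)
        = Module.finrank ℝ (LinearMap.ker f₁) :=
      Submodule.finrank_map_subtype_eq Mu _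
    have e₂ : Module.finrank ℝ ((LinearMap.ker f₂).map Mb.subtype)
        = Module.finrank ℝ (LinearMap.ker f₂) :=
      Submodule.finrank_map_subtype_eq Mb _
    rw [← e₁, ← e₂]
    exact Submodule.finrank_mono hker
  omega

/-- The flux influence index is submodular, intersection and
union of subnetworks being taken componentwise. -/
theorem stmt5 {V E : Type*} [Fintype V] [Fintype E] [DecidableEq V] [DecidableEq E]
    (S : Matrix V E ℝ) (γ1 γ2 : Finset V × Finset E) :
    fluxIndex S (γ1.1 ∩ γ2.1, γ1.2 ∩ γ2.2) +
      fluxIndex S (γ1.1 ∪ γ2.1, γ1.2 ∪ γ2.2) ≤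
    fluxIndex S γ1 + fluxIndex S γ2 := by
  have hcard := Finset.card_inter_add_card_union γ1.1 γ2.1
  have hcard' := Finset.card_inter_add_card_union γ1.2 γ2.2
  have hdim := finrank_proj_submodular (cokerMat S) γ1.1 γ2.1
  simp only [fluxIndex]
  omega
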